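/- arXiv:1508.04050 — 3 statements merged into one kernel-verified Lean document; each statement's English description precedes it below -/
import Mathlib

section
/- Let n ∈ ℕ, j : Fin n → ℕ, σ, τ ∈ Σ_n, and set k = j∘τ⁻¹ (so that k_i = j_{τ⁻¹(i)} and ∑ k = ∑ j). Then in Σ_{∑ i, j i} one has δ_{n;k}(σ) · δ_{n;j}(τ) = δ_{n;j}(σ·τ), where δ_{n;k}(σ) is regarded as a permutation of Fin (∑ i, j i) via the equality ∑ k = ∑ j. -/
/-- Splitting a sigma type over `Fin (n+1)` as first block plus the rest. -/
def sigmaFinSuccEquiv (n : ℕ) (β : Fin (n + 1) → Type*) :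
    ((i : Fin (n + 1)) × β i) ≃ β 0 ⊕ ((i : Fin n) × β i.succ) where
  toFun x := Fin.cases (motive := fun i => β i → β 0 ⊕ ((i : Fin n) × β i.succ))
    (fun b => Sum.inl b) (fun i b => Sum.inr ⟨i, b⟩) x.1 x.2
  invFun x := Sum.elim (fun b => ⟨0, b⟩) (fun p => ⟨p.1.succ, p.2⟩) x
  left_inv := by
    rintro ⟨i, b⟩
    induction i using Fin.cases <;> simp
  right_inv := by rintro (b | ⟨i, b⟩) <;> simp

/-- The canonical order-preserving equivalence `(Σ i : Fin n, Fin (k i)) ≃ Fin (∑ i, k i)`,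
putting the blocks in order. -/
def finSigmaFinEquivBlocks : ∀ {n : ℕ} {k : Fin n → ℕ}, ((i : Fin n) × Fin (k i)) ≃ Fin (∑ i, k i)
  | 0, k => (Equiv.equivOfIsEmpty _ (Fin 0)).trans (finCongr (Fin.sum_univ_zero k).symm)
  | n + 1, k =>
      ((sigmaFinSuccEquiv n fun i => Fin (k i)).trans
        ((Equiv.refl (Fin (k 0))).sumCongr (finSigmaFinEquivBlocks (k := fun i => k i.succ)))).trans
        (finSumFinEquiv.trans (finCongr (Fin.sum_univ_succ k).symm))

/-- The block sum `β_k(h₁, …, h_n)` of permutations `h i : Σ_{k i}`: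
on the sigma type it is `(i, j) ↦ (i, h i j)`. -/
def blockSum {n : ℕ} {k : Fin n → ℕ} (h : (i : Fin n) → Equiv.Perm (Fin (k i))) :
    Equiv.Perm (Fin (∑ i, k i)) :=
  finSigmaFinEquivBlocks.symm.trans ((Equiv.sigmaCongrRight h).trans finSigmaFinEquivBlocks)

/-- The block permutation `δ_{n;k}(σ)`: on the sigma type it is `(i, j) ↦ (σ i, j)`,
regarded as a permutation of `Fin (∑ i, k i)` via `∑ i, k (σ⁻¹ i) = ∑ i, k i`. -/
def blockPerm {n : ℕ} (k : Fin n → ℕ) (σ : Equiv.Perm (Fin n)) :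
    Equiv.Perm (Fin (∑ i, k i)) :=
  finSigmaFinEquivBlocks.symm.trans
    ((Equiv.sigmaCongrLeft' (β := fun i => Fin (k i)) σ).trans
      (finSigmaFinEquivBlocks.trans (finCongr (Equiv.sum_comp σ.symm k))))

/-- Transport of permutations along an equality of cardinalities. -/
def permCast {a b : ℕ} (h : a = b) : Equiv.Perm (Fin a) ≃ Equiv.Perm (Fin b) :=
  (finCongr h).permCongr

/-- Flattening a doubly indexed family of sizes. -/
def flatten {n : ℕ} {k : Fin n → ℕ} (m : (i : Fin n) → Fin (k i) → ℕ) :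
    Fin (∑ i, k i) → ℕ :=
  fun y => m (finSigmaFinEquivBlocks.symm y).1 (finSigmaFinEquivBlocks.symm y).2

/-- The canonical identification of the double sum with the sum of the flattened family. -/
theorem sum_flatten {n : ℕ} {k : Fin n → ℕ} (m : (i : Fin n) → Fin (k i) → ℕ) :
    ∑ i, ∑ j, m i j = ∑ y, flatten m y := by
  rw [← Equiv.sum_comp (finSigmaFinEquivBlocks (k := k)) (flatten m),
    ← Finset.univ_sigma_univ, Finset.sum_sigma]
  exact Finset.sum_congr rfl fun a _ => Finset.sum_congr rfl fun s _ => by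
    simp only [flatten]
    conv_rhs => rw [Equiv.symm_apply_apply]

theorem finSigmaFinEquiv_val : ∀ {n : ℕ} {k : Fin n → ℕ} (i : Fin n) (b : Fin (k i)),
    ((finSigmaFinEquivBlocks ⟨i, b⟩ : Fin (∑ i, k i)) : ℕ)
      = ∑ i' ∈ Finset.univ.filter (· < i), k i' + b
  | 0, k, i, b => i.elim0
  | n + 1, k, i, b => by
    induction i using Fin.cases with
    | zero =>
        simp [finSigmaFinEquivBlocks, sigmaFinSuccEquiv]
    | succ i =>
        have IH := finSigmaFinEquiv_val (k := fun i => k i.succ) i b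
        simp only [finSigmaFinEquivBlocks, Equiv.trans_apply, sigmaFinSuccEquiv, Equiv.coe_fn_mk,
          Fin.cases_succ, Equiv.sumCongr_apply, Sum.map_inr, finSumFinEquiv_apply_right,
          finCongr_apply, Fin.coe_cast, Fin.coe_natAdd] at *
        rw [IH]
        rw [Finset.sum_filter, Finset.sum_filter, Fin.sum_univ_succ]
        simp [Fin.succ_lt_succ_iff, Nat.add_assoc]

theorem sigmaCongrLeft'_fin_apply {n : ℕ} {k : Fin n → ℕ} (σ : Equiv.Perm (Fin n))
    (i : Fin n) (b : Fin (k i)) :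
    (Equiv.sigmaCongrLeft' (β := fun i => Fin (k i)) σ) ⟨i, b⟩
      = ⟨σ i, Fin.cast (congrArg k (σ.symm_apply_apply i).symm) b⟩ := by
  rw [Equiv.sigmaCongrLeft', Equiv.symm_apply_eq, Equiv.sigmaCongrLeft_apply]
  exact Sigma.ext (by simp) (by rw [Fin.heq_ext_iff (by simp)]; simp)

theorem blockPerm_apply {n : ℕ} (k : Fin n → ℕ) (σ : Equiv.Perm (Fin n))
    (i : Fin n) (b : Fin (k i)) :
    blockPerm k σ (finSigmaFinEquivBlocks ⟨i, b⟩)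
      = finCongr (Equiv.sum_comp σ.symm k)
          (finSigmaFinEquivBlocks (k := fun i' => k (σ.symm i'))
            ⟨σ i, Fin.cast (congrArg k (σ.symm_apply_apply i).symm) b⟩) := by
  simp [blockPerm, sigmaCongrLeft'_fin_apply]

theorem blockPerm_mul_blockPerm {n : ℕ} (j : Fin n → ℕ) (σ τ : Equiv.Perm (Fin n)) :
    permCast (Equiv.sum_comp τ.symm j) (blockPerm (fun i => j (τ.symm i)) σ) * blockPerm j τ =
      blockPerm j (σ * τ) := by
  ext x
  obtain ⟨⟨i, b⟩, rfl⟩ := finSigmaFinEquivBlocks.surjective x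
  simp only [Equiv.Perm.mul_apply, permCast, Equiv.permCongr_apply]
  rw [blockPerm_apply j τ, Equiv.symm_apply_apply, blockPerm_apply, blockPerm_apply]
  simp only [finCongr_apply, Fin.coe_cast, finSigmaFinEquiv_val]
  simp only [Equiv.Perm.mul_apply, mul_inv_rev, Fin.coe_cast]
  rfl
end

section
/- Let n ∈ ℕ, k : Fin n → ℕ, m : (i : Fin n) → Fin (k i) → ℕ, and g_i ∈ Σ_{k i} for each i. Then β_{(∑_j m_1(j), …, ∑_j m_n(j))}(δ_{k_1;m_1}(g_1), …, δ_{k_n;m_n}(g_n)) = δ_{∑ k; m♭}(β_k(g_1, …, g_n)), where m♭ : Fin (∑ i, k i) → ℕ is the flattened family of the m_i(j), and both sides are regarded as permutations of the same finite set via the canonical identification of ∑_i ∑_j m_i(j) with the sum of the flattened family. -/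
def partSum {N : ℕ} (k : Fin N → ℕ) (i : Fin N) : ℕ :=
  ∑ x, if x < i then k x else 0

lemma fse_val : ∀ {n : ℕ} {k : Fin n → ℕ} (i : Fin n) (j : Fin (k i)),
    ((finSigmaFinEquivBlocks ⟨i, j⟩ : Fin (∑ i, k i)) : ℕ) = partSum k i + j
  | 0, k, i, j => i.elim0
  | n + 1, k, i, j => by
    induction i using Fin.cases with
    | zero =>
      simp [finSigmaFinEquivBlocks, sigmaFinSuccEquiv, partSum, Fin.not_lt_zero]
    | succ i =>
      have ih := fse_val (k := fun x => k x.succ) i j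
      simp only [finSigmaFinEquivBlocks, sigmaFinSuccEquiv, Equiv.trans_apply, Equiv.coe_fn_mk,
        Fin.cases_succ, Equiv.sumCongr_apply, Sum.map_inr, finSumFinEquiv_apply_right,
        finCongr_apply, Fin.coe_cast, Fin.coe_natAdd, Equiv.refl_apply]
      rw [ih]
      have : partSum k i.succ = k 0 + partSum (fun x => k x.succ) i := by
        simp only [partSum]
        rw [Fin.sum_univ_succ]
        simp [Fin.succ_lt_succ_iff, Fin.succ_pos]
      omega

lemma partSum_add_le {N : ℕ} (k : Fin N → ℕ) {x i : Fin N} (h : x < i) :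
    partSum k x + k x ≤ partSum k i := by
  simp only [partSum]
  have h1 : ∀ z : Fin N, (if z < x then k z else 0) + (if z = x then k z else 0)
      ≤ if z < i then k z else 0 := by
    intro z
    rcases lt_trichotomy z x with hz | hz | hz
    · simp [hz, Fin.ne_of_lt hz, hz.trans h, not_lt.mpr hz.le]
    · simp [hz, h, lt_irrefl]
    · simp [not_lt.mpr hz.le, Fin.ne_of_gt hz]
  calc (∑ z, if z < x then k z else 0) + k x
      = ∑ z, ((if z < x then k z else 0) + (if z = x then k z else 0)) := by
        rw [Finset.sum_add_distrib, Finset.sum_ite_eq' Finset.univ x k]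
        simp
    _ ≤ _ := Finset.sum_le_sum fun z _ => h1 z

lemma fse_lt_fse_iff {n : ℕ} {k : Fin n → ℕ} {x i : Fin n} (jx : Fin (k x)) (a : Fin (k i)) :
    finSigmaFinEquivBlocks ⟨x, jx⟩ < finSigmaFinEquivBlocks ⟨i, a⟩ ↔
      x < i ∨ (x = i ∧ (jx : ℕ) < (a : ℕ)) := by
  rw [Fin.lt_iff_val_lt_val, fse_val, fse_val]
  constructor
  · intro h
    rcases lt_trichotomy x i with hx | hx | hx
    · exact Or.inl hx
    · subst hx; exact Or.inr ⟨rfl, by omega⟩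
    · exfalso
      have := partSum_add_le k hx
      have := a.isLt
      omega
  · rintro (hx | ⟨rfl, hj⟩)
    · have := partSum_add_le k hx
      have := jx.isLt
      omega
    · omega

lemma sum_lt_fse {n : ℕ} {k : Fin n → ℕ} (F : Fin (∑ i, k i) → ℕ) (i : Fin n) (a : Fin (k i)) :
    partSum F (finSigmaFinEquivBlocks ⟨i, a⟩) =
      (∑ x, if x < i then (∑ j, F (finSigmaFinEquivBlocks ⟨x, j⟩)) else 0)
        + ∑ j : Fin (k i), if (j : ℕ) < (a : ℕ) then F (finSigmaFinEquivBlocks ⟨i, j⟩) else 0 := by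
  rw [partSum, ← Equiv.sum_comp (finSigmaFinEquivBlocks (k := k))
    (fun z => if z < finSigmaFinEquivBlocks ⟨i, a⟩ then F z else 0), ← Finset.univ_sigma_univ,
    Finset.sum_sigma]
  have key : ∀ x : Fin n, (∑ j : Fin (k x),
      if finSigmaFinEquivBlocks ⟨x, j⟩ < finSigmaFinEquivBlocks ⟨i, a⟩ then F (finSigmaFinEquivBlocks ⟨x, j⟩) else 0)
      = (if x < i then (∑ j, F (finSigmaFinEquivBlocks ⟨x, j⟩)) else 0)
        + (if x = i then (∑ j : Fin (k i), if (j : ℕ) < (a : ℕ) then F (finSigmaFinEquivBlocks ⟨i, j⟩) else 0)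
            else 0) := by
    intro x
    rcases lt_trichotomy x i with hx | hx | hx
    · simp only [hx, if_true, Fin.ne_of_lt hx, if_false, add_zero]
      refine Finset.sum_congr rfl fun j _ => ?_
      rw [if_pos ((fse_lt_fse_iff j a).mpr (Or.inl hx))]
    · subst hx
      simp only [lt_irrefl, if_false, if_pos rfl, zero_add]
      refine Finset.sum_congr rfl fun j _ => ?_
      by_cases hj : (j : ℕ) < (a : ℕ)
      · rw [if_pos ((fse_lt_fse_iff j a).mpr (Or.inr ⟨rfl, hj⟩)), if_pos hj]
      · rw [if_neg, if_neg hj]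
        rw [fse_lt_fse_iff]
        simp [hj, lt_irrefl]
    · simp only [not_lt.mpr hx.le, if_false, Fin.ne_of_gt hx, if_false, add_zero]
      refine Finset.sum_eq_zero fun j _ => ?_
      rw [if_neg]
      rw [fse_lt_fse_iff]
      push_neg
      exact ⟨hx.le, fun h => absurd h (Fin.ne_of_gt hx)⟩
  calc _ = ∑ x : Fin n, ∑ j : Fin (k x),
        if finSigmaFinEquivBlocks ⟨x, j⟩ < finSigmaFinEquivBlocks ⟨i, a⟩ then F (finSigmaFinEquivBlocks ⟨x, j⟩)
        else 0 := rfl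
    _ = _ := by
      simp only [key]
      rw [Finset.sum_add_distrib, Finset.sum_ite_eq' Finset.univ i]
      simp

lemma blockSum_apply {n : ℕ} {k : Fin n → ℕ} (h : (i : Fin n) → Equiv.Perm (Fin (k i)))
    (i : Fin n) (j : Fin (k i)) :
    blockSum h (finSigmaFinEquivBlocks ⟨i, j⟩) = finSigmaFinEquivBlocks ⟨i, h i j⟩ := by
  simp [blockSum, Equiv.sigmaCongrRight]

lemma blockSum_symm_apply {n : ℕ} {k : Fin n → ℕ} (h : (i : Fin n) → Equiv.Perm (Fin (k i)))
    (i : Fin n) (j : Fin (k i)) :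
    (blockSum h).symm (finSigmaFinEquivBlocks ⟨i, j⟩) = finSigmaFinEquivBlocks ⟨i, (h i).symm j⟩ := by
  rw [Equiv.symm_apply_eq, blockSum_apply]
  simp

lemma fin_val_eq_of_heq {a b : ℕ} (h : a = b) {x : Fin a} {y : Fin b} (h2 : HEq x y) :
    (x : ℕ) = (y : ℕ) := by subst h; cases h2; rfl

lemma blockPerm_val {n : ℕ} (k : Fin n → ℕ) (σ : Equiv.Perm (Fin n)) (i : Fin n)
    (j : Fin (k i)) :
    ((blockPerm k σ (finSigmaFinEquivBlocks ⟨i, j⟩) : Fin (∑ i, k i)) : ℕ) =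
      partSum (fun x => k (σ.symm x)) (σ i) + j := by
  rw [blockPerm]
  simp only [Equiv.trans_apply, Equiv.symm_apply_apply, finCongr_apply, Fin.coe_cast]
  set q := Equiv.sigmaCongrLeft' (β := fun i => Fin (k i)) σ ⟨i, j⟩ with hq
  have hq2 : Equiv.sigmaCongrLeft (β := fun i => Fin (k i)) σ.symm q = ⟨i, j⟩ := by
    rw [hq, Equiv.sigmaCongrLeft', Equiv.apply_symm_apply]
  have h1 : σ.symm q.1 = i := congrArg Sigma.fst hq2
  have h1' : q.1 = σ i := by rw [← h1, Equiv.apply_symm_apply]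
  have h2 : (q.2 : ℕ) = (j : ℕ) := by
    have := Sigma.mk.inj_iff.mp hq2
    exact fin_val_eq_of_heq (by rw [h1]) this.2
  rw [fse_val, h2, h1']

lemma flatten_fse {n : ℕ} {k : Fin n → ℕ} (m : (i : Fin n) → Fin (k i) → ℕ)
    (i : Fin n) (a : Fin (k i)) : flatten m (finSigmaFinEquivBlocks ⟨i, a⟩) = m i a :=
  congrArg (fun p : (i : Fin n) × Fin (k i) => m p.1 p.2)
    (finSigmaFinEquivBlocks.symm_apply_apply ⟨i, a⟩)

theorem blockSum_blockPerm_eq_blockPerm_blockSum {n : ℕ} (k : Fin n → ℕ)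
    (m : (i : Fin n) → Fin (k i) → ℕ) (g : (i : Fin n) → Equiv.Perm (Fin (k i))) :
    permCast (sum_flatten m) (blockSum fun i => blockPerm (m i) (g i)) =
      blockPerm (flatten m) (blockSum g) := by
  have hsum := sum_flatten m
  ext x
  obtain ⟨⟨i, j⟩, hx⟩ := finSigmaFinEquivBlocks.surjective (finCongr hsum.symm x)
  obtain ⟨⟨a, b⟩, rfl⟩ := finSigmaFinEquivBlocks.surjective j
  have hx' : x = finCongr hsum (finSigmaFinEquivBlocks ⟨i, finSigmaFinEquivBlocks ⟨a, b⟩⟩) := by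
    rw [hx]; simp
  -- LHS value
  have hL : ((permCast (sum_flatten m) (blockSum fun i => blockPerm (m i) (g i)) x : _) : ℕ)
      = partSum (fun x => ∑ j, m x j) i
        + (partSum (fun c => m i ((g i).symm c)) (g i a) + (b : ℕ)) := by
    have : finCongr hsum.symm x = finSigmaFinEquivBlocks ⟨i, finSigmaFinEquivBlocks ⟨a, b⟩⟩ := hx.symm
    rw [permCast, Equiv.permCongr_apply]
    rw [show (finCongr (sum_flatten m)).symm x = finSigmaFinEquivBlocks ⟨i, finSigmaFinEquivBlocks ⟨a, b⟩⟩
      from hx.symm]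
    rw [blockSum_apply, finCongr_apply, Fin.coe_cast, fse_val, blockPerm_val]
  -- express x in the flatten decomposition
  have hfa : flatten m (finSigmaFinEquivBlocks ⟨i, a⟩) = m i a := flatten_fse m i a
  set y : Fin (∑ i, k i) := finSigmaFinEquivBlocks ⟨i, a⟩ with hy
  set c : Fin (flatten m y) := Fin.cast hfa.symm b with hc
  have hxy : x = finSigmaFinEquivBlocks (k := flatten m) ⟨y, c⟩ := by
    refine Fin.val_injective ?_
    rw [hx', finCongr_apply, Fin.coe_cast, fse_val, fse_val, fse_val,
      sum_lt_fse (flatten m) i a]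
    have e1 : ∀ x' : Fin n, (∑ j', flatten m (finSigmaFinEquivBlocks ⟨x', j'⟩)) = ∑ j', m x' j' :=
      fun x' => Finset.sum_congr rfl fun j' _ => flatten_fse m x' j'
    have e2 : (∑ j' : Fin (k i), if (j' : ℕ) < (a : ℕ) then flatten m (finSigmaFinEquivBlocks ⟨i, j'⟩)
        else 0) = partSum (m i) a := by
      rw [partSum]
      refine Finset.sum_congr rfl fun j' _ => ?_
      rw [flatten_fse]
      rfl
    simp only [e1, e2]
    have : (c : ℕ) = (b : ℕ) := rfl
    rw [this, partSum, partSum]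
    omega
  -- RHS value
  have hR : ((blockPerm (flatten m) (blockSum g) x : _) : ℕ)
      = partSum (fun x => ∑ j, m x j) i
        + (partSum (fun c => m i ((g i).symm c)) (g i a) + (b : ℕ)) := by
    rw [hxy, blockPerm_val, blockSum_apply]
    have hcb : (c : ℕ) = (b : ℕ) := rfl
    rw [hcb]
    rw [show partSum (fun z => flatten m ((blockSum g).symm z)) (finSigmaFinEquivBlocks ⟨i, g i a⟩)
        = _ from sum_lt_fse (fun z => flatten m ((blockSum g).symm z)) i (g i a)]
    have e1 : ∀ x' : Fin n, (∑ j', flatten m ((blockSum g).symm (finSigmaFinEquivBlocks ⟨x', j'⟩)))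
        = ∑ j', m x' j' := by
      intro x'
      rw [show (∑ j', flatten m ((blockSum g).symm (finSigmaFinEquivBlocks ⟨x', j'⟩)))
          = ∑ j', m x' ((g x').symm j') from Finset.sum_congr rfl fun j' _ => by
        rw [blockSum_symm_apply, flatten_fse]]
      exact Equiv.sum_comp (g x').symm (m x')
    have e2 : (∑ j' : Fin (k i), if (j' : ℕ) < ((g i a : Fin (k i)) : ℕ)
        then flatten m ((blockSum g).symm (finSigmaFinEquivBlocks ⟨i, j'⟩)) else 0)
        = partSum (fun c => m i ((g i).symm c)) (g i a) := by
      rw [partSum]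
      refine Finset.sum_congr rfl fun j' _ => ?_
      rw [blockSum_symm_apply, flatten_fse]
      rfl
    rw [e2]
    simp only [e1]
    simp only [partSum]
    omega
  rw [hL, hR]
end

section
/- Let (Λ, π, β, δ) be an action-operad datum and define μ(g; h_1, …, h_n) := δ_{n;k}(g)·β_k(h_1, …, h_n) ∈ Λ(∑k) for g ∈ Λ(n) and h_i ∈ Λ(k_i). Then μ is associative: for f ∈ Λ(m), g_i ∈ Λ(n_i) (1 ≤ i ≤ m) and h_{ij} ∈ Λ(p_{ij}) (1 ≤ j ≤ n_i), one has μ(f; μ(g_1; h_{11}, …, h_{1n_1}), …, μ(g_m; h_{m1}, …, h_{mn_m})) = μ(μ(f; g_1, …, g_m); h_{11}, …, h_{1n_1}, h_{21}, …, h_{mn_m}), where both sides are regarded in the same group via the canonical identification of ∑_i ∑_j p_{ij} with the sum of the flattened family. -/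
/-- Transport along an equality of indices. -/
def acast {Λ : ℕ → Type*} {a b : ℕ} (h : a = b) (x : Λ a) : Λ b := h ▸ x

/-- An action-operad datum: a family of groups `Λ n` with maps to the symmetric groups,
block sum homomorphisms `β` and block functions `δ`, satisfying the nine axioms of
Theorem 1.9 (charAOp). -/
structure ActionOperadData (Λ : ℕ → Type*) [∀ n, Group (Λ n)] where
  π : ∀ n : ℕ, Λ n →* Equiv.Perm (Fin n)
  β : ∀ (n : ℕ) (k : Fin n → ℕ), ((i : Fin n) → Λ (k i)) →* Λ (∑ i, k i)
  δ : ∀ (n : ℕ) (k : Fin n → ℕ), Λ n → Λ (∑ i, k i)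
  /-- (1) `β` is compatible with the underlying permutations. -/
  ax1 : ∀ (n : ℕ) (k : Fin n → ℕ) (h : (i : Fin n) → Λ (k i)),
    π (∑ i, k i) (β n k h) = blockSum fun i => π (k i) (h i)
  /-- (2) for `n = 1`, `β : Λ(k) → Λ(k)` is the identity. -/
  ax2 : ∀ (k : Fin 1 → ℕ) (h : (i : Fin 1) → Λ (k i)),
    β 1 k h = acast (Fin.sum_univ_one k).symm (h 0)
  /-- (3) `β` applied to a family of `β`'s is `β` of the flattened family. -/
  ax3 : ∀ (n : ℕ) (k : Fin n → ℕ) (m : (i : Fin n) → Fin (k i) → ℕ)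
      (h : (i : Fin n) → (j : Fin (k i)) → Λ (m i j)),
    acast (sum_flatten m) (β n (fun i => ∑ j, m i j) (fun i => β (k i) (m i) (h i))) =
      β (∑ i, k i) (flatten m)
        (fun y => h (finSigmaFinEquivBlocks.symm y).1 (finSigmaFinEquivBlocks.symm y).2)
  /-- (4) `δ` is compatible with the underlying permutations. -/
  ax4 : ∀ (n : ℕ) (k : Fin n → ℕ) (g : Λ n),
    π (∑ i, k i) (δ n k g) = blockPerm k (π n g)
  /-- (5) `δ_{n;(1,…,1)}` and `δ_{1;(n)}` are the identity. -/
  ax5a : ∀ (n : ℕ) (g : Λ n), δ n (fun _ => 1) g = acast (by simp) g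
  ax5b : ∀ n : ℕ, δ 1 (fun _ => n) 1 = 1
  /-- (6) twisted multiplicativity of `δ`. -/
  ax6 : ∀ (n : ℕ) (k j : Fin n → ℕ) (g h : Λ n)
      (hmatch : ∀ i, k i = j ((π n h)⁻¹ i)),
    acast ((Finset.sum_congr rfl fun i _ => hmatch i).trans
        (Equiv.sum_comp (π n h)⁻¹ j)) (δ n k g) * δ n j h = δ n j (g * h)
  /-- (7) associativity of `δ`. -/
  ax7 : ∀ (n : ℕ) (m : Fin n → ℕ) (p : (i : Fin n) → Fin (m i) → ℕ) (f : Λ n),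
    δ (∑ i, m i) (flatten p) (δ n m f) = acast (sum_flatten p) (δ n (fun i => ∑ j, p i j) f)
  /-- (8) commutation of `δ` past `β`. -/
  ax8 : ∀ (n : ℕ) (k : Fin n → ℕ) (g : Λ n) (h : (i : Fin n) → Λ (k i)),
    δ n k g * β n k h =
      acast (Equiv.sum_comp (π n g)⁻¹ k)
          (β n (fun i => k ((π n g)⁻¹ i)) (fun i => h ((π n g)⁻¹ i))) * δ n k g
  /-- (9) interchange of `β` and `δ`. -/
  ax9 : ∀ (n : ℕ) (k : Fin n → ℕ) (m : (i : Fin n) → Fin (k i) → ℕ)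
      (g : (i : Fin n) → Λ (k i)),
    acast (sum_flatten m) (β n (fun i => ∑ j, m i j) (fun i => δ (k i) (m i) (g i))) =
      δ (∑ i, k i) (flatten m) (β n k g)

lemma acast_mul {Λ : ℕ → Type*} [∀ n, Group (Λ n)] {a b : ℕ} (h : a = b) (x y : Λ a) :
    acast h (x * y) = acast h x * acast h y := by subst h; rfl

lemma acast_trans' {Λ : ℕ → Type*} {a b c : ℕ} (h1 : a = b) (h2 : b = c) (x : Λ a) :
    acast h2 (acast h1 x) = acast (h1.trans h2) x := by subst h1; subst h2; rfl

lemma acast_delta_congr {Λ : ℕ → Type*} [∀ n, Group (Λ n)] (D : ActionOperadData Λ)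
    (n : ℕ) {k k' : Fin n → ℕ} (hkk : k = k') {b : ℕ}
    (e : ∑ i, k i = b) (e' : ∑ i, k' i = b) (g : Λ n) :
    acast e (D.δ n k g) = acast e' (D.δ n k' g) := by subst hkk; rfl

/-- The multiplication `μ(g; h₁, …, h_n) := δ_{n;k}(g)·β_k(h₁, …, h_n)` associated to an
action-operad datum is associative. -/
theorem mu_associative {Λ : ℕ → Type*} [∀ n, Group (Λ n)] (D : ActionOperadData Λ)
    (m : ℕ) (n : Fin m → ℕ) (p : (i : Fin m) → Fin (n i) → ℕ)
    (f : Λ m) (g : (i : Fin m) → Λ (n i))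
    (h : (i : Fin m) → (j : Fin (n i)) → Λ (p i j)) :
    acast (sum_flatten p)
        (D.δ m (fun i => ∑ j, p i j) f *
          D.β m (fun i => ∑ j, p i j)
            (fun i => D.δ (n i) (p i) (g i) * D.β (n i) (p i) (h i))) =
      D.δ (∑ i, n i) (flatten p) (D.δ m n f * D.β m n g) *
        D.β (∑ i, n i) (flatten p)
          (fun y => h (finSigmaFinEquivBlocks.symm y).1 (finSigmaFinEquivBlocks.symm y).2) := by
  classical
  set N : ℕ := ∑ i, n i with hN
  -- the twisted flattened family
  set p' : (i : Fin m) → Fin (n i) → ℕ := fun a b => p a ((D.π (n a) (g a))⁻¹ b) with hp'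
  have hfam : (fun i => D.δ (n i) (p i) (g i) * D.β (n i) (p i) (h i))
      = (fun i => D.δ (n i) (p i) (g i)) * (fun i => D.β (n i) (p i) (h i)) := rfl
  rw [hfam, map_mul, ← mul_assoc, acast_mul, acast_mul, D.ax9 m n p g, D.ax3 m n p h,
    ← D.ax7 m n p f]
  rw [← D.ax6 N (fun y => flatten p ((D.π N (D.β m n g))⁻¹ y)) (flatten p)
    (D.δ m n f) (D.β m n g) (fun i => rfl)]
  congr 1
  congr 1
  -- reduce to the equality of the `δ f` factors
  have hk : (fun y => flatten p ((D.π N (D.β m n g))⁻¹ y)) = flatten p' := by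
    funext y
    rw [D.ax1]
    simp [flatten, blockSum, hp', Equiv.Perm.inv_def]
    rw [Equiv.symm_apply_apply]
    rfl
  have key : acast
      ((Finset.sum_congr rfl fun i _ => (fun _ => rfl) i).trans
        (Equiv.sum_comp (D.π N (D.β m n g))⁻¹ (flatten p)))
      (D.δ N (fun y => flatten p ((D.π N (D.β m n g))⁻¹ y)) (D.δ m n f))
      = acast (hk ▸ ((Finset.sum_congr rfl fun i _ => (fun _ => rfl) i).trans
        (Equiv.sum_comp (D.π N (D.β m n g))⁻¹ (flatten p))))
      (D.δ N (flatten p') (D.δ m n f)) :=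
    acast_delta_congr D N hk _ _ _
  rw [key, D.ax7 m n p' f, acast_trans']
  rw [D.ax7 m n p f]
  exact acast_delta_congr D m
    (funext fun a => (Equiv.sum_comp ((D.π (n a) (g a))⁻¹) (p a)).symm) _ _ f
end
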